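/- Let τ be a continuous distributive triangle function and γ a τ-decomposable measure on a σ-ring Σ continuous from below. For each (simple) γ-integrable non-negative function f, the set function ν^f_E := ∫_E f dγ is itself a τ-decomposable measure on Σ: ν^f_∅ = ε₀ and ν^f_{E∪F} = τ(ν^f_E, ν^f_F) for disjoint E, F ∈ Σ. -/

import Mathlib

open MeasureTheory Filter Set Topology

noncomputable section

/-- The distribution function of the Dirac measure at 0. -/
def eps0 : ℝ → ℝ := fun x => if 0 < x then 1 else 0

/-- εₐ : the distribution function of the Dirac measure at `a`. -/
def epsAt (a : ℝ) : ℝ → ℝ := fun x => if a < x then 1 else 0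

/-- Distance distribution function: non-decreasing, left-continuous,
vanishing on `(-∞,0]`, with values in `[0,1]` and `sup F = 1`. -/
def IsDDF (F : ℝ → ℝ) : Prop :=
  Monotone F ∧ (∀ x : ℝ, ContinuousWithinAt F (Set.Iio x) x) ∧
  (∀ x ≤ (0:ℝ), F x = 0) ∧ (∀ x, 0 ≤ F x ∧ F x ≤ 1) ∧
  Tendsto F atTop (nhds 1)

/-- Triangle function on Δ⁺: maps Δ⁺ × Δ⁺ into Δ⁺, symmetric, associative,
non-decreasing in each variable, with ε₀ as identity. -/
def IsTriangleFn (τ : (ℝ → ℝ) → (ℝ → ℝ) → (ℝ → ℝ)) : Prop :=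
  (∀ G H, IsDDF G → IsDDF H → IsDDF (τ G H)) ∧
  (∀ G H, τ G H = τ H G) ∧
  (∀ F G H, τ (τ F G) H = τ F (τ G H)) ∧
  (∀ F G H : ℝ → ℝ, F ≤ G → τ F H ≤ τ G H) ∧
  (∀ G, IsDDF G → τ G eps0 = G)

/-- Scalar multiplication `c ⊙ G` on Δ⁺. -/
def smulDDF (c : ℝ) (G : ℝ → ℝ) : ℝ → ℝ := fun x => if c = 0 then eps0 x else G (x / c)

/-- Distributive triangle function: `c ⊙ τ(G,H) = τ(c ⊙ G, c ⊙ H)`. -/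
def IsDistributive (τ : (ℝ → ℝ) → (ℝ → ℝ) → (ℝ → ℝ)) : Prop :=
  ∀ c : ℝ, 0 ≤ c → ∀ G H, smulDDF c (τ G H) = τ (smulDDF c G) (smulDDF c H)

/-- The Sibley (modified Lévy) metric on Δ⁺. -/
def dS (G H : ℝ → ℝ) : ℝ :=
  sInf {h : ℝ | 0 < h ∧ ∀ x ∈ Set.Icc (0:ℝ) (1/h),
    G (x - h) - h ≤ H x ∧ H x ≤ G (x + h) + h}

/-- Iterated τ-sum `⊕_{i} G i` over `Fin n` (empty sum is `ε₀`). -/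
def oplus (τ : (ℝ → ℝ) → (ℝ → ℝ) → (ℝ → ℝ)) : ∀ {n : ℕ}, (Fin n → (ℝ → ℝ)) → (ℝ → ℝ)
  | 0, _ => eps0
  | _ + 1, G => τ (G 0) (oplus τ (fun i => G i.succ))

/-- Partial sums `⊕_{k=0}^{n} G k` of a sequence. -/
def oplusPartial (τ : (ℝ → ℝ) → (ℝ → ℝ) → (ℝ → ℝ)) (G : ℕ → (ℝ → ℝ)) : ℕ → (ℝ → ℝ)
  | 0 => G 0
  | n + 1 => τ (oplusPartial τ G n) (G (n + 1))

/-- A simple non-negative function: finite values on pairwise disjoint measurable sets. -/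
structure SimpleFn (S : Set (Set Ω)) where
  n : ℕ
  c : Fin n → ℝ
  A : Fin n → Set Ω
  hc : ∀ i, 0 ≤ c i
  hA : ∀ i, A i ∈ S
  hdisj : Pairwise (Function.onFun Disjoint A)

def SimpleFn.toFun {Ω : Type*} {S : Set (Set Ω)} (f : SimpleFn S) : Ω → ℝ :=
  fun t => ∑ i, (f.A i).indicator (fun _ => f.c i) t

/-- The γ-integral of a simple function on `E`: `⊕ᵢ xᵢ ⊙ γ_{E∩Eᵢ}`. -/
def SimpleFn.integral {Ω : Type*} {S : Set (Set Ω)} (f : SimpleFn S)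
    (τ : (ℝ → ℝ) → (ℝ → ℝ) → (ℝ → ℝ)) (γ : Set Ω → (ℝ → ℝ)) (E : Set Ω) : ℝ → ℝ :=
  oplus τ (fun i => smulDDF (f.c i) (γ (E ∩ f.A i)))

/-- Left-continuous regularization `𝔊(x) = sup_{x' < x} G(x')`. -/
def lcReg (G : ℝ → ℝ) : ℝ → ℝ := fun x => sSup (G '' Set.Iio x)

/-- `𝔣 ∈ 𝒮_{f,E}` : simple functions below `f` on `E`. -/
def SimpleFn.belowOn {Ω : Type*} {S : Set (Set Ω)} (𝔣 : SimpleFn S)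
    (f : Ω → ENNReal) (E : Set Ω) : Prop :=
  ∀ t ∈ E, ENNReal.ofReal (𝔣.toFun t) ≤ f t

/-- `f` is γ-integrable on `E`: the integrals of simple functions below `f`
are bounded from below by some distance distribution function. -/
def Integrable' {Ω : Type*} {S : Set (Set Ω)}
    (τ : (ℝ → ℝ) → (ℝ → ℝ) → (ℝ → ℝ)) (γ : Set Ω → (ℝ → ℝ))
    (f : Ω → ENNReal) (E : Set Ω) : Prop :=
  ∃ H : ℝ → ℝ, IsDDF H ∧ ∀ 𝔣 : SimpleFn S, 𝔣.belowOn f E → H ≤ 𝔣.integral τ γ E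

/-- The γ-integral `∫_E f dγ` : the infimum in (Δ⁺, ≤) of integrals of simple
functions below `f` on `E` (left-continuous regularization of the pointwise infimum). -/
def probIntegral {Ω : Type*} (S : Set (Set Ω))
    (τ : (ℝ → ℝ) → (ℝ → ℝ) → (ℝ → ℝ)) (γ : Set Ω → (ℝ → ℝ))
    (f : Ω → ENNReal) (E : Set Ω) : ℝ → ℝ :=
  lcReg (fun x => sInf {y | ∃ 𝔣 : SimpleFn S, 𝔣.belowOn f E ∧ 𝔣.integral τ γ E x = y})

open Classical in
/-- The Lebesgue–Stieltjes measure of a monotone function (junk value otherwise). -/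
def lsMeasure (H : ℝ → ℝ) : Measure ℝ :=
  if h : Monotone H then h.stieltjesFunction.measure else 0

/-- Convolution `(G * H)(x) = ∫₀ˣ G(x−t) dH(t)` (Lebesgue–Stieltjes). -/
def conv (G H : ℝ → ℝ) : ℝ → ℝ := fun x =>
  if 0 < x then ∫ t in Set.Icc (0:ℝ) x, G (x - t) ∂(lsMeasure H) else 0

/-- `τ_{L,M}(G,H)(x) = sup_{L(u,v)=x} min(G(u),H(v))`. -/
def tauLM (L : ℝ → ℝ → ℝ) (G H : ℝ → ℝ) : ℝ → ℝ := fun x =>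
  sSup {t | ∃ u v : ℝ, 0 ≤ u ∧ 0 ≤ v ∧ L u v = x ∧ t = min (G u) (H v)}

/-- Pseudo-addition on `[0,∞)`: commutative, associative, jointly strictly
increasing, continuous, with neutral element 0. -/
def IsPseudoAddition (L : ℝ → ℝ → ℝ) : Prop :=
  (∀ u v, 0 ≤ u → 0 ≤ v → L u v = L v u) ∧
  (∀ u v w, 0 ≤ u → 0 ≤ v → 0 ≤ w → L (L u v) w = L u (L v w)) ∧
  (∀ u₁ u₂ v₁ v₂, 0 ≤ u₁ → 0 ≤ v₁ → u₁ < u₂ → v₁ < v₂ → L u₁ v₁ < L u₂ v₂) ∧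
  Continuous (fun p : ℝ × ℝ => L p.1 p.2) ∧
  (∀ u, 0 ≤ u → L 0 u = u ∧ L u 0 = u)

/-- γ is a τ-decomposable measure on the ring S. -/
def IsDecomposable {Ω : Type*} (S : Set (Set Ω))
    (τ : (ℝ → ℝ) → (ℝ → ℝ) → (ℝ → ℝ)) (γ : Set Ω → (ℝ → ℝ)) : Prop :=
  γ ∅ = eps0 ∧ ∀ E F : Set Ω, E ∈ S → F ∈ S → Disjoint E F → γ (E ∪ F) = τ (γ E) (γ F)

/-- γ is continuous from below: `γ_{E_n} → γ_E` weakly (in the Sibley metric)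
whenever `E_n ↗ E`. -/
def ContinuousFromBelow {Ω : Type*} (S : Set (Set Ω)) (γ : Set Ω → (ℝ → ℝ)) : Prop :=
  ∀ E : ℕ → Set Ω, (∀ n, E n ∈ S) → Monotone E → (⋃ n, E n) ∈ S →
    Tendsto (fun n => dS (γ (E n)) (γ (⋃ n, E n))) atTop (nhds 0)

/-- Sequential continuity of a triangle function w.r.t. the Sibley metric. -/
def IsContinuousTriangle (τ : (ℝ → ℝ) → (ℝ → ℝ) → (ℝ → ℝ)) : Prop :=
  ∀ (G H : ℝ → ℝ) (Gn Hn : ℕ → (ℝ → ℝ)), IsDDF G → IsDDF H → (∀ n, IsDDF (Gn n)) →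
    (∀ n, IsDDF (Hn n)) →
    Tendsto (fun n => dS (Gn n) G) atTop (nhds 0) →
    Tendsto (fun n => dS (Hn n) H) atTop (nhds 0) →
    Tendsto (fun n => dS (τ (Gn n) (Hn n)) (τ G H)) atTop (nhds 0)


lemma eps0_isDDF : IsDDF eps0 := by
  refine ⟨?_, ?_, ?_, ?_, ?_⟩
  · intro x y hxy
    simp only [eps0]
    by_cases hx : 0 < x
    · rw [if_pos hx, if_pos (lt_of_lt_of_le hx hxy)]
    · rw [if_neg hx]; split <;> norm_num
  · intro x
    rcases le_or_gt x 0 with hx | hx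
    · have : ∀ y ∈ Iio x, eps0 y = 0 := by
        intro y hy; simp only [eps0, if_neg (not_lt.2 (le_of_lt (lt_of_lt_of_le hy hx)))]
      have hx0 : eps0 x = 0 := by simp only [eps0, if_neg (not_lt.2 hx)]
      rw [ContinuousWithinAt, hx0]
      refine Tendsto.congr' ?_ tendsto_const_nhds
      filter_upwards [self_mem_nhdsWithin] with y hy using (this y hy).symm
    · have hx1 : eps0 x = 1 := by simp only [eps0, if_pos hx]
      rw [ContinuousWithinAt, hx1]
      refine Tendsto.congr' ?_ tendsto_const_nhds
      have : Ioi (0:ℝ) ∈ 𝓝[<] x := nhdsWithin_le_nhds (Ioi_mem_nhds hx)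
      filter_upwards [this] with y hy
      exact (if_pos hy).symm
  · intro x hx; simp only [eps0, if_neg (not_lt.2 hx)]
  · intro x; simp only [eps0]; split <;> norm_num
  · refine Tendsto.congr' ?_ tendsto_const_nhds
    filter_upwards [eventually_gt_atTop 0] with y hy
    exact (if_pos hy).symm

lemma IsDDF.le_eps0 {G : ℝ → ℝ} (hG : IsDDF G) : G ≤ eps0 := by
  intro x
  rcases le_or_gt x 0 with hx | hx
  · rw [hG.2.2.1 x hx]; exact (eps0_isDDF.2.2.2.1 x).1
  · simp only [eps0, if_pos hx]; exact (hG.2.2.2.1 x).2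

lemma smulDDF_zero (G : ℝ → ℝ) : smulDDF 0 G = eps0 := by
  funext x; simp [smulDDF]

lemma smulDDF_isDDF {c : ℝ} (hc : 0 ≤ c) {G : ℝ → ℝ} (hG : IsDDF G) :
    IsDDF (smulDDF c G) := by
  rcases eq_or_lt_of_le hc with rfl | hc
  · rw [smulDDF_zero]; exact eps0_isDDF
  · have hcne : c ≠ 0 := ne_of_gt hc
    have hrw : smulDDF c G = fun x => G (x / c) := by
      funext x; simp [smulDDF, hcne]
    rw [hrw]
    refine ⟨?_, ?_, ?_, ?_, ?_⟩
    · intro x y hxy; exact hG.1 (by gcongr)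
    · intro x
      have h1 : ContinuousWithinAt (fun y : ℝ => y / c) (Iio x) x :=
        (continuous_id.div_const c).continuousWithinAt
      have h2 : MapsTo (fun y : ℝ => y / c) (Iio x) (Iio (x / c)) := by
        intro y hy; exact div_lt_div_of_pos_right hy hc
      exact ContinuousWithinAt.comp (g := G) (hG.2.1 (x / c)) h1 h2
    · intro x hx
      exact hG.2.2.1 _ (div_nonpos_of_nonpos_of_nonneg hx hc.le)
    · intro x; exact hG.2.2.2.1 _
    · exact hG.2.2.2.2.comp (Tendsto.atTop_div_const hc tendsto_id)

lemma smulDDF_eps0 {c : ℝ} (hc : 0 ≤ c) : smulDDF c eps0 = eps0 := by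
  rcases eq_or_lt_of_le hc with rfl | hc
  · exact smulDDF_zero _
  · funext x
    simp only [smulDDF, if_neg (ne_of_gt hc), eps0]
    by_cases hx : 0 < x
    · rw [if_pos (div_pos hx hc), if_pos hx]
    · rw [if_neg, if_neg hx]
      intro h
      apply hx
      by_contra hx'
      push_neg at hx'
      have := div_nonpos_of_nonpos_of_nonneg hx' hc.le
      linarith

lemma smulDDF_anti {a b : ℝ} (ha : 0 ≤ a) (hab : a ≤ b) {G : ℝ → ℝ} (hG : IsDDF G) :
    smulDDF b G ≤ smulDDF a G := by
  rcases eq_or_lt_of_le ha with rfl | ha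
  · rw [smulDDF_zero]
    exact (smulDDF_isDDF (le_trans le_rfl hab) hG).le_eps0
  · have hb : 0 < b := lt_of_lt_of_le ha hab
    intro x
    simp only [smulDDF, if_neg (ne_of_gt ha), if_neg (ne_of_gt hb)]
    rcases le_or_gt x 0 with hx | hx
    · rw [hG.2.2.1 _ (div_nonpos_of_nonpos_of_nonneg hx hb.le),
        hG.2.2.1 _ (div_nonpos_of_nonpos_of_nonneg hx ha.le)]
    · exact hG.1 (by rw [div_le_div_iff₀ hb ha]; nlinarith)

/-- Bundled triangle function. -/
def TFn := {t : (ℝ → ℝ) → (ℝ → ℝ) → (ℝ → ℝ) // IsTriangleFn t}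

/-- DDFs, as a type depending on a bundled triangle function (to host a monoid). -/
structure Df (_T : TFn) where
  val : ℝ → ℝ
  prop : IsDDF val

lemma Df.ext' {T : TFn} {a b : Df T} (h : a.val = b.val) : a = b := by
  cases a; cases b; cases h; rfl

instance (T : TFn) : CommMonoid (Df T) where
  mul a b := ⟨T.1 a.1 b.1, T.2.1 _ _ a.prop b.prop⟩
  one := ⟨eps0, eps0_isDDF⟩
  mul_assoc a b c := Df.ext' (T.2.2.2.1 _ _ _)
  mul_comm a b := Df.ext' (T.2.2.1 _ _)
  mul_one a := Df.ext' (T.2.2.2.2.2 _ a.prop)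
  one_mul a := Df.ext' (by
    show T.1 eps0 a.val = a.val
    rw [T.2.2.1]
    exact T.2.2.2.2.2 _ a.prop)

lemma Df.mul_val {T : TFn} (a b : Df T) : (a * b).1 = T.1 a.1 b.1 := rfl
lemma Df.one_val {T : TFn} : (1 : Df T).1 = eps0 := rfl

lemma tau_mono₂ (T : TFn) {F G F' G' : ℝ → ℝ} (h1 : F ≤ G) (h2 : F' ≤ G') :
    T.1 F F' ≤ T.1 G G' := by
  calc T.1 F F' ≤ T.1 G F' := T.2.2.2.2.1 _ _ _ h1
    _ = T.1 F' G := T.2.2.1 _ _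
    _ ≤ T.1 G' G := T.2.2.2.2.1 _ _ _ h2
    _ = T.1 G G' := T.2.2.1 _ _

lemma Df.mul_le_left {T : TFn} (a b : Df T) : (a * b).1 ≤ a.1 := by
  have : T.1 a.1 b.1 ≤ T.1 a.1 eps0 := tau_mono₂ T le_rfl b.prop.le_eps0
  rw [T.2.2.2.2.2 _ a.prop] at this
  exact this

lemma Df.le_one {T : TFn} (a : Df T) : a.1 ≤ (1 : Df T).1 := a.prop.le_eps0

lemma oplus_prod (T : TFn) : ∀ {n : ℕ} (G : Fin n → ℝ → ℝ) (hG : ∀ i, IsDDF (G i)),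
    oplus T.1 G = (∏ i, (⟨G i, hG i⟩ : Df T)).1
  | 0, G, hG => by simp [oplus]; rfl
  | n + 1, G, hG => by
    rw [Fin.prod_univ_succ]
    show T.1 (G 0) (oplus T.1 fun i => G i.succ) = _
    rw [oplus_prod T (fun i => G i.succ) (fun i => hG i.succ)]
    rfl

lemma prod_val_mono {T : TFn} : ∀ {n : ℕ} {f g : Fin n → Df T},
    (∀ i, (f i).1 ≤ (g i).1) → (∏ i, f i).1 ≤ (∏ i, g i).1
  | 0, f, g, _ => by simp
  | n + 1, f, g, h => by
    rw [Fin.prod_univ_succ, Fin.prod_univ_succ, Df.mul_val, Df.mul_val]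
    exact tau_mono₂ T (h 0) (prod_val_mono (fun i => h i.succ))

section RingClosure
variable {Ω : Type*} {S : Set (Set Ω)}

lemma inter_memS (hdiff : ∀ A B : Set Ω, A ∈ S → B ∈ S → A \ B ∈ S)
    {A B : Set Ω} (hA : A ∈ S) (hB : B ∈ S) : A ∩ B ∈ S := by
  have : A ∩ B = A \ (A \ B) := by
    ext t; simp only [Set.mem_inter_iff, Set.mem_diff]; tauto
  rw [this]; exact hdiff _ _ hA (hdiff _ _ hA hB)

lemma union_memS (hempty : (∅ : Set Ω) ∈ S)
    (hiUnion : ∀ g : ℕ → Set Ω, (∀ n, g n ∈ S) → (⋃ n, g n) ∈ S)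
    {A B : Set Ω} (hA : A ∈ S) (hB : B ∈ S) : A ∪ B ∈ S := by
  have : A ∪ B = ⋃ n : ℕ, (if n = 0 then A else if n = 1 then B else ∅) := by
    ext t
    simp only [Set.mem_union, Set.mem_iUnion]
    constructor
    · rintro (h | h)
      · exact ⟨0, by simp [h]⟩
      · exact ⟨1, by simp [h]⟩
    · rintro ⟨n, hn⟩
      rcases n with _ | _ | n <;> simp_all
  rw [this]
  apply hiUnion
  intro n
  rcases n with _ | _ | n <;> simp_all

lemma iUnion_fin_memS (hempty : (∅ : Set Ω) ∈ S)
    (hiUnion : ∀ g : ℕ → Set Ω, (∀ n, g n ∈ S) → (⋃ n, g n) ∈ S) :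
    ∀ {n : ℕ} (B : Fin n → Set Ω), (∀ i, B i ∈ S) → (⋃ i, B i) ∈ S
  | 0, B, _ => by simpa using hempty
  | n + 1, B, hB => by
    have : (⋃ i, B i) = B 0 ∪ ⋃ i : Fin n, B i.succ := by
      ext t
      simp only [Set.mem_iUnion, Set.mem_union]
      constructor
      · rintro ⟨i, hi⟩
        rcases Fin.eq_zero_or_eq_succ i with rfl | ⟨j, rfl⟩
        · exact Or.inl hi
        · exact Or.inr ⟨j, hi⟩
      · rintro (h | ⟨j, hj⟩)
        exacts [⟨0, h⟩, ⟨j.succ, hj⟩]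
    rw [this]
    exact union_memS hempty hiUnion (hB 0)
      (iUnion_fin_memS hempty hiUnion _ (fun i => hB i.succ))

end RingClosure

section GammaAdd
variable {Ω : Type*} {S : Set (Set Ω)} {T : TFn} {γ : Set Ω → (ℝ → ℝ)}

lemma pairwise_tail {n : ℕ} {B : Fin (n+1) → Set Ω}
    (h : Pairwise (Function.onFun Disjoint B)) :
    Pairwise (Function.onFun Disjoint (fun i : Fin n => B i.succ)) := by
  intro i j hij
  exact h (fun hc => hij (Fin.succ_injective n hc))

lemma gamma_finAdd (hempty : (∅ : Set Ω) ∈ S)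
    (hiUnion : ∀ g : ℕ → Set Ω, (∀ n, g n ∈ S) → (⋃ n, g n) ∈ S)
    (hmem : ∀ E ∈ S, IsDDF (γ E)) (hγ : IsDecomposable S T.1 γ) :
    ∀ {n : ℕ} (B : Fin n → Set Ω) (hB : ∀ i, B i ∈ S)
      (_ : Pairwise (Function.onFun Disjoint B)),
      γ (⋃ i, B i) = (∏ i, (⟨γ (B i), hmem _ (hB i)⟩ : Df T)).val
  | 0, B, hB, hp => by
    rw [Finset.univ_eq_empty, Finset.prod_empty]
    have : (⋃ i, B i) = (∅ : Set Ω) := by simp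
    rw [this, hγ.1]; rfl
  | n + 1, B, hB, hp => by
    have hU : (⋃ i, B i) = B 0 ∪ ⋃ i : Fin n, B i.succ := by
      ext t
      simp only [Set.mem_iUnion, Set.mem_union]
      constructor
      · rintro ⟨i, hi⟩
        rcases Fin.eq_zero_or_eq_succ i with rfl | ⟨j, rfl⟩
        · exact Or.inl hi
        · exact Or.inr ⟨j, hi⟩
      · rintro (h | ⟨j, hj⟩)
        exacts [⟨0, h⟩, ⟨j.succ, hj⟩]
    have hdisj : Disjoint (B 0) (⋃ i : Fin n, B i.succ) := by
      apply Set.disjoint_iUnion_right.2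
      intro i
      exact hp (by simp [Fin.ext_iff])
    rw [hU, hγ.2 _ _ (hB 0) (iUnion_fin_memS hempty hiUnion _ (fun i => hB i.succ)) hdisj,
      Fin.prod_univ_succ, Df.mul_val,
      gamma_finAdd hempty hiUnion hmem hγ (fun i => B i.succ) (fun i => hB i.succ)
        (pairwise_tail hp)]

lemma smul_prodDf (hd : IsDistributive T.1) {c : ℝ} (hc : 0 ≤ c) :
    ∀ {n : ℕ} (f : Fin n → Df T),
      smulDDF c (∏ i, f i).val
        = (∏ i, (⟨smulDDF c (f i).val, smulDDF_isDDF hc (f i).prop⟩ : Df T)).val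
  | 0, f => by
    rw [Finset.univ_eq_empty, Finset.prod_empty, Finset.prod_empty]
    show smulDDF c eps0 = eps0
    exact smulDDF_eps0 hc
  | n + 1, f => by
    rw [Fin.prod_univ_succ, Fin.prod_univ_succ, Df.mul_val, Df.mul_val,
      hd c hc, smul_prodDf hd hc (fun i => f i.succ)]

end GammaAdd

section SimpleFnLemmas
variable {Ω : Type*} {S : Set (Set Ω)} {T : TFn} {γ : Set Ω → (ℝ → ℝ)}

lemma oplus_prod' {T : TFn} {n : ℕ} (g : Fin n → Df T) :
    oplus T.1 (fun i => (g i).val) = (∏ i, g i).val :=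
  oplus_prod T _ (fun i => (g i).prop)

lemma oplus_eps0 {T : TFn} : ∀ {n : ℕ} (G : Fin n → ℝ → ℝ),
    (∀ i, G i = eps0) → oplus T.1 G = eps0
  | 0, _, _ => rfl
  | n + 1, G, h => by
    show T.1 (G 0) (oplus T.1 fun i => G i.succ) = eps0
    rw [h 0, oplus_eps0 (fun i => G i.succ) (fun i => h i.succ)]
    exact T.2.2.2.2.2 _ eps0_isDDF

/-- The pieces of the integral of a simple function, as elements of `Df T`. -/
def SimpleFn.piece (f : SimpleFn S) (T : TFn) (γ : Set Ω → (ℝ → ℝ)) (E : Set Ω)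
    (h : ∀ i, IsDDF (smulDDF (f.c i) (γ (E ∩ f.A i)))) (i : Fin f.n) : Df T :=
  ⟨smulDDF (f.c i) (γ (E ∩ f.A i)), h i⟩

lemma SimpleFn.integral_eq_prod (f : SimpleFn S) (T : TFn) (γ : Set Ω → (ℝ → ℝ)) (E : Set Ω)
    (h : ∀ i, IsDDF (smulDDF (f.c i) (γ (E ∩ f.A i)))) :
    f.integral T.1 γ E = (∏ i, f.piece T γ E h i).val :=
  oplus_prod T _ h

lemma piece_ddf (hdiff : ∀ A B : Set Ω, A ∈ S → B ∈ S → A \ B ∈ S)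
    (hmem : ∀ E ∈ S, IsDDF (γ E)) (f : SimpleFn S) {E : Set Ω} (hE : E ∈ S) :
    ∀ i, IsDDF (smulDDF (f.c i) (γ (E ∩ f.A i))) :=
  fun i => smulDDF_isDDF (f.hc i) (hmem _ (inter_memS hdiff hE (f.hA i)))

lemma integral_isDDF (hdiff : ∀ A B : Set Ω, A ∈ S → B ∈ S → A \ B ∈ S)
    (hmem : ∀ E ∈ S, IsDDF (γ E)) (f : SimpleFn S) {E : Set Ω} (hE : E ∈ S) :
    IsDDF (f.integral T.1 γ E) := by
  rw [f.integral_eq_prod T γ E (piece_ddf hdiff hmem f hE)]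
  exact (∏ i, f.piece T γ E (piece_ddf hdiff hmem f hE) i).prop

lemma integral_empty (hγ : IsDecomposable S T.1 γ) (f : SimpleFn S) :
    f.integral T.1 γ ∅ = eps0 := by
  apply oplus_eps0
  intro i
  rw [Set.empty_inter, hγ.1, smulDDF_eps0 (f.hc i)]

lemma integral_union (hempty : (∅ : Set Ω) ∈ S)
    (hdiff : ∀ A B : Set Ω, A ∈ S → B ∈ S → A \ B ∈ S)
    (hmem : ∀ E ∈ S, IsDDF (γ E)) (hγ : IsDecomposable S T.1 γ)
    (hd : IsDistributive T.1) (f : SimpleFn S) {E F : Set Ω}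
    (hE : E ∈ S) (hF : F ∈ S) (hEF : Disjoint E F) :
    f.integral T.1 γ (E ∪ F) = T.1 (f.integral T.1 γ E) (f.integral T.1 γ F) := by
  have hX := piece_ddf (γ := γ) hdiff hmem f hE
  have hY := piece_ddf (γ := γ) hdiff hmem f hF
  set X : Fin f.n → Df T := f.piece T γ E hX with hXdef
  set Y : Fin f.n → Df T := f.piece T γ F hY with hYdef
  have hterm : ∀ i, smulDDF (f.c i) (γ ((E ∪ F) ∩ f.A i)) = (X i * Y i).val := by
    intro i
    have h1 : (E ∪ F) ∩ f.A i = (E ∩ f.A i) ∪ (F ∩ f.A i) := Set.union_inter_distrib_right ..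
    have h2 : Disjoint (E ∩ f.A i) (F ∩ f.A i) :=
      (hEF.mono Set.inter_subset_left Set.inter_subset_left)
    rw [h1, hγ.2 _ _ (inter_memS hdiff hE (f.hA i)) (inter_memS hdiff hF (f.hA i)) h2]
    have := hd (f.c i) (f.hc i) (γ (E ∩ f.A i)) (γ (F ∩ f.A i))
    rw [this]
    rfl
  have : f.integral T.1 γ (E ∪ F) = oplus T.1 (fun i => (X i * Y i).val) := by
    show oplus T.1 (fun i => smulDDF (f.c i) (γ ((E ∪ F) ∩ f.A i))) = _
    rw [funext hterm]
  rw [this, oplus_prod' (fun i => X i * Y i), Finset.prod_mul_distrib, Df.mul_val,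
    f.integral_eq_prod T γ E hX, f.integral_eq_prod T γ F hY]

end SimpleFnLemmas

section MaxCombine
variable {Ω : Type*} {S : Set (Set Ω)} {T : TFn} {γ : Set Ω → (ℝ → ℝ)}

/-- Union of the pieces of a simple function. -/
def SimpleFn.carrier (f : SimpleFn S) : Set Ω := ⋃ i, f.A i

/-- Extended pieces: the original pieces plus the part of `g`'s carrier missed by `f`. -/
def extA (f g : SimpleFn S) : Fin (f.n + 1) → Set Ω :=
  Fin.snoc f.A (g.carrier \ f.carrier)

/-- Extended coefficients: the original ones plus `0`. -/
def extc (f : SimpleFn S) : Fin (f.n + 1) → ℝ := Fin.snoc f.c 0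

lemma extc_nonneg (f : SimpleFn S) (i : Fin (f.n + 1)) : 0 ≤ extc f i := by
  induction i using Fin.lastCases with
  | last => simp [extc]
  | cast i => simpa [extc] using f.hc i

lemma extA_mem (hdiff : ∀ A B : Set Ω, A ∈ S → B ∈ S → A \ B ∈ S)
    (hempty : (∅ : Set Ω) ∈ S)
    (hiUnion : ∀ g : ℕ → Set Ω, (∀ n, g n ∈ S) → (⋃ n, g n) ∈ S)
    (f g : SimpleFn S) (i : Fin (f.n + 1)) : extA f g i ∈ S := by
  induction i using Fin.lastCases with
  | last =>
    simp only [extA, Fin.snoc_last]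
    exact hdiff _ _ (iUnion_fin_memS hempty hiUnion _ g.hA)
      (iUnion_fin_memS hempty hiUnion _ f.hA)
  | cast i => simpa [extA] using f.hA i

lemma extA_pairwise (f g : SimpleFn S) :
    Pairwise (Function.onFun Disjoint (extA f g)) := by
  intro i j hij
  have key : ∀ i : Fin f.n, Disjoint (extA f g i.castSucc) (extA f g (Fin.last f.n)) := by
    intro i
    simp only [extA, Fin.snoc_castSucc, Fin.snoc_last]
    refine Set.disjoint_left.2 fun t ht hmem => hmem.2 ?_
    exact Set.mem_iUnion.2 ⟨i, ht⟩
  induction i using Fin.lastCases with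
  | last =>
    induction j using Fin.lastCases with
    | last => exact absurd rfl hij
    | cast j => exact (key j).symm
  | cast i =>
    induction j using Fin.lastCases with
    | last => exact key i
    | cast j =>
      simp only [Function.onFun, extA, Fin.snoc_castSucc]
      exact f.hdisj (fun h => hij (by rw [h]))

lemma extA_iUnion (f g : SimpleFn S) :
    (⋃ i, extA f g i) = f.carrier ∪ g.carrier := by
  ext t
  simp only [Set.mem_iUnion, Set.mem_union]
  constructor
  · rintro ⟨i, hi⟩
    induction i using Fin.lastCases with
    | last =>
      simp only [extA, Fin.snoc_last] at hi
      exact Or.inr hi.1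
    | cast i =>
      simp only [extA, Fin.snoc_castSucc] at hi
      exact Or.inl (Set.mem_iUnion.2 ⟨i, hi⟩)
  · rintro (h | h)
    · rcases Set.mem_iUnion.1 h with ⟨i, hi⟩
      exact ⟨i.castSucc, by simpa [extA] using hi⟩
    · by_cases hf : t ∈ f.carrier
      · rcases Set.mem_iUnion.1 hf with ⟨i, hi⟩
        exact ⟨i.castSucc, by simpa [extA] using hi⟩
      · exact ⟨Fin.last f.n, by simp only [extA, Fin.snoc_last]; exact ⟨h, hf⟩⟩

/-- The pointwise maximum of two simple functions (on the union of carriers). -/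
def maxCombine (hempty : (∅ : Set Ω) ∈ S)
    (hdiff : ∀ A B : Set Ω, A ∈ S → B ∈ S → A \ B ∈ S)
    (hiUnion : ∀ g : ℕ → Set Ω, (∀ n, g n ∈ S) → (⋃ n, g n) ∈ S)
    (f g : SimpleFn S) : SimpleFn S where
  n := (f.n + 1) * (g.n + 1)
  c := fun k => max (extc f (finProdFinEquiv.symm k).1) (extc g (finProdFinEquiv.symm k).2)
  A := fun k => extA f g (finProdFinEquiv.symm k).1 ∩ extA g f (finProdFinEquiv.symm k).2
  hc := fun k => le_max_of_le_left (extc_nonneg f _)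
  hA := fun k => inter_memS hdiff (extA_mem hdiff hempty hiUnion f g _)
    (extA_mem hdiff hempty hiUnion g f _)
  hdisj := by
    intro k k' hkk'
    have hp : finProdFinEquiv.symm k ≠ finProdFinEquiv.symm k' :=
      fun h => hkk' (finProdFinEquiv.symm.injective h)
    rcases Prod.mk.injEq _ _ _ _ ▸ (fun h => hp h) with _
    have : (finProdFinEquiv.symm k).1 ≠ (finProdFinEquiv.symm k').1 ∨
        (finProdFinEquiv.symm k).2 ≠ (finProdFinEquiv.symm k').2 := by
      by_contra h
      push_neg at h
      exact hp (Prod.ext h.1 h.2)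
    rcases this with h | h
    · exact Set.disjoint_of_subset Set.inter_subset_left Set.inter_subset_left
        (extA_pairwise f g h)
    · exact Set.disjoint_of_subset Set.inter_subset_right Set.inter_subset_right
        (extA_pairwise g f h)

end MaxCombine

section ToFun
variable {Ω : Type*} {S : Set (Set Ω)}

lemma SimpleFn.toFun_eq_of_mem (f : SimpleFn S) {t : Ω} {i : Fin f.n}
    (h : t ∈ f.A i) : f.toFun t = f.c i := by
  unfold SimpleFn.toFun
  rw [Finset.sum_eq_single_of_mem i (Finset.mem_univ i)]
  · simp [Set.indicator_of_mem h]
  · intro j _ hji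
    apply Set.indicator_of_notMem
    intro hj
    exact (f.hdisj hji).ne_of_mem hj h rfl

lemma SimpleFn.toFun_eq_zero (f : SimpleFn S) {t : Ω}
    (h : ∀ i, t ∉ f.A i) : f.toFun t = 0 := by
  unfold SimpleFn.toFun
  exact Finset.sum_eq_zero fun i _ => Set.indicator_of_notMem (h i) _

lemma maxCombine_belowOn (hempty : (∅ : Set Ω) ∈ S)
    (hdiff : ∀ A B : Set Ω, A ∈ S → B ∈ S → A \ B ∈ S)
    (hiUnion : ∀ g : ℕ → Set Ω, (∀ n, g n ∈ S) → (⋃ n, g n) ∈ S)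
    {f g : SimpleFn S} {F : Ω → ENNReal} {E : Set Ω}
    (hf : f.belowOn F E) (hg : g.belowOn F E) :
    (maxCombine hempty hdiff hiUnion f g).belowOn F E := by
  intro t ht
  set h := maxCombine hempty hdiff hiUnion f g with hh
  by_cases hex : ∃ k, t ∈ h.A k
  · rcases hex with ⟨k, hk⟩
    rw [h.toFun_eq_of_mem hk]
    have hk1 : t ∈ extA f g (finProdFinEquiv.symm k).1 := hk.1
    have hk2 : t ∈ extA g f (finProdFinEquiv.symm k).2 := hk.2
    have hc1 : ENNReal.ofReal (extc f (finProdFinEquiv.symm k).1) ≤ F t := by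
      generalize (finProdFinEquiv.symm k).1 = i at hk1
      induction i using Fin.lastCases with
      | last => simp [extc]
      | cast i =>
        simp only [extA, Fin.snoc_castSucc] at hk1
        simp only [extc, Fin.snoc_castSucc]
        rw [← f.toFun_eq_of_mem hk1]
        exact hf t ht
    have hc2 : ENNReal.ofReal (extc g (finProdFinEquiv.symm k).2) ≤ F t := by
      generalize (finProdFinEquiv.symm k).2 = j at hk2
      induction j using Fin.lastCases with
      | last => simp [extc]
      | cast j =>
        simp only [extA, Fin.snoc_castSucc] at hk2
        simp only [extc, Fin.snoc_castSucc]
        rw [← g.toFun_eq_of_mem hk2]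
        exact hg t ht
    show ENNReal.ofReal (max _ _) ≤ F t
    rcases max_cases (extc f (finProdFinEquiv.symm k).1) (extc g (finProdFinEquiv.symm k).2)
      with ⟨hmax, _⟩ | ⟨hmax, _⟩ <;> rw [hmax]
    exacts [hc1, hc2]
  · push_neg at hex
    rw [h.toFun_eq_zero hex]
    simp

end ToFun

section MaxIntegral
variable {Ω : Type*} {S : Set (Set Ω)} {T : TFn} {γ : Set Ω → (ℝ → ℝ)}

lemma piece_val (f : SimpleFn S) (T : TFn) (γ : Set Ω → (ℝ → ℝ)) (E : Set Ω)
    (h : ∀ i, IsDDF (smulDDF (f.c i) (γ (E ∩ f.A i)))) (i : Fin f.n) :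
    (f.piece T γ E h i).val = smulDDF (f.c i) (γ (E ∩ f.A i)) := rfl

lemma maxCombine_c (hempty : (∅ : Set Ω) ∈ S)
    (hdiff : ∀ A B : Set Ω, A ∈ S → B ∈ S → A \ B ∈ S)
    (hiUnion : ∀ g : ℕ → Set Ω, (∀ n, g n ∈ S) → (⋃ n, g n) ∈ S)
    (f g : SimpleFn S) (k) :
    (maxCombine hempty hdiff hiUnion f g).c k =
      max (extc f (finProdFinEquiv.symm k).1) (extc g (finProdFinEquiv.symm k).2) := rfl

lemma maxCombine_A (hempty : (∅ : Set Ω) ∈ S)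
    (hdiff : ∀ A B : Set Ω, A ∈ S → B ∈ S → A \ B ∈ S)
    (hiUnion : ∀ g : ℕ → Set Ω, (∀ n, g n ∈ S) → (⋃ n, g n) ∈ S)
    (f g : SimpleFn S) (k) :
    (maxCombine hempty hdiff hiUnion f g).A k =
      extA f g (finProdFinEquiv.symm k).1 ∩ extA g f (finProdFinEquiv.symm k).2 := rfl

lemma union_pieces (f g : SimpleFn S) (E : Set Ω) (i : Fin (f.n + 1)) :
    (⋃ j, E ∩ (extA f g i ∩ extA g f j)) = E ∩ extA f g i := by
  have h1 : extA f g i ⊆ ⋃ j, extA g f j := by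
    rw [extA_iUnion g f]
    intro t ht
    have h2 : t ∈ ⋃ i', extA f g i' := Set.mem_iUnion.2 ⟨i, ht⟩
    rw [extA_iUnion f g] at h2
    exact Set.union_comm _ _ ▸ h2
  ext t
  simp only [Set.mem_iUnion, Set.mem_inter_iff]
  constructor
  · rintro ⟨j, ht, hx, _⟩; exact ⟨ht, hx⟩
  · rintro ⟨ht, hx⟩
    rcases Set.mem_iUnion.1 (h1 hx) with ⟨j, hj⟩
    exact ⟨j, ht, hx, hj⟩

lemma collapse_lemma (hempty : (∅ : Set Ω) ∈ S)
    (hiUnion : ∀ g : ℕ → Set Ω, (∀ n, g n ∈ S) → (⋃ n, g n) ∈ S)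
    (hmem : ∀ E ∈ S, IsDDF (γ E)) (hγ : IsDecomposable S T.1 γ)
    (hd : IsDistributive T.1) (f g : SimpleFn S) {E : Set Ω}
    {c : ℝ} (hc : 0 ≤ c) (i : Fin (f.n + 1))
    (h1 : ∀ j, IsDDF (smulDDF c (γ (E ∩ (extA f g i ∩ extA g f j)))))
    (h2 : IsDDF (smulDDF c (γ (E ∩ extA f g i))))
    (hB : ∀ j, E ∩ (extA f g i ∩ extA g f j) ∈ S) :
    (∏ j : Fin (g.n + 1),
      (⟨smulDDF c (γ (E ∩ (extA f g i ∩ extA g f j))), h1 j⟩ : Df T)) =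
    ⟨smulDDF c (γ (E ∩ extA f g i)), h2⟩ := by
  apply Df.ext'
  have hpair : Pairwise (Function.onFun Disjoint
      (fun j => E ∩ (extA f g i ∩ extA g f j))) := by
    intro j j' hjj'
    exact Set.disjoint_of_subset
      (Set.inter_subset_right.trans Set.inter_subset_right)
      (Set.inter_subset_right.trans Set.inter_subset_right)
      (extA_pairwise g f hjj')
  have hγadd := gamma_finAdd (T := T) hempty hiUnion hmem hγ _ hB hpair
  rw [union_pieces f g E i] at hγadd
  show _ = smulDDF c (γ (E ∩ extA f g i))
  rw [hγadd, smul_prodDf hd hc]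

lemma prodV_eq (hdiff : ∀ A B : Set Ω, A ∈ S → B ∈ S → A \ B ∈ S)
    (hmem : ∀ E ∈ S, IsDDF (γ E)) (f g : SimpleFn S) {E : Set Ω} (hE : E ∈ S)
    (h1 : ∀ i, IsDDF (smulDDF (extc f i) (γ (E ∩ extA f g i)))) :
    (∏ i : Fin (f.n + 1),
      (⟨smulDDF (extc f i) (γ (E ∩ extA f g i)), h1 i⟩ : Df T)).val
      = f.integral T.1 γ E := by
  rw [Fin.prod_univ_castSucc]
  have hlast : (⟨smulDDF (extc f (Fin.last f.n)) (γ (E ∩ extA f g (Fin.last f.n))),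
      h1 (Fin.last f.n)⟩ : Df T) = (1 : Df T) := by
    apply Df.ext'
    show smulDDF (extc f (Fin.last f.n)) _ = eps0
    have h0 : extc f (Fin.last f.n) = 0 := by simp [extc]
    rw [h0, smulDDF_zero]
  rw [hlast, mul_one, f.integral_eq_prod T γ E (piece_ddf hdiff hmem f hE)]
  refine congrArg Df.val (Finset.prod_congr rfl ?_)
  intro i _
  apply Df.ext'
  show smulDDF (extc f i.castSucc) (γ (E ∩ extA f g i.castSucc)) = _
  have h1' : extc f i.castSucc = f.c i := by simp [extc]
  have h2' : extA f g i.castSucc = f.A i := by simp [extA]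
  rw [h1', h2']
  rfl

lemma maxCombine_integral_le (hempty : (∅ : Set Ω) ∈ S)
    (hdiff : ∀ A B : Set Ω, A ∈ S → B ∈ S → A \ B ∈ S)
    (hiUnion : ∀ g : ℕ → Set Ω, (∀ n, g n ∈ S) → (⋃ n, g n) ∈ S)
    (hmem : ∀ E ∈ S, IsDDF (γ E)) (hγ : IsDecomposable S T.1 γ)
    (hd : IsDistributive T.1) (f g : SimpleFn S) {E : Set Ω} (hE : E ∈ S) :
    (maxCombine hempty hdiff hiUnion f g).integral T.1 γ E ≤ f.integral T.1 γ E ∧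
    (maxCombine hempty hdiff hiUnion f g).integral T.1 γ E ≤ g.integral T.1 γ E := by
  have hXmem : ∀ i, extA f g i ∈ S := extA_mem hdiff hempty hiUnion f g
  have hYmem : ∀ j, extA g f j ∈ S := extA_mem hdiff hempty hiUnion g f
  have hPmem : ∀ (i : Fin (f.n+1)) (j : Fin (g.n+1)),
      E ∩ (extA f g i ∩ extA g f j) ∈ S :=
    fun i j => inter_memS hdiff hE (inter_memS hdiff (hXmem i) (hYmem j))
  have hPmem' : ∀ (j : Fin (g.n+1)) (i : Fin (f.n+1)),
      E ∩ (extA g f j ∩ extA f g i) ∈ S :=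
    fun j i => inter_memS hdiff hE (inter_memS hdiff (hYmem j) (hXmem i))
  have hpd := piece_ddf hdiff hmem (maxCombine hempty hdiff hiUnion f g) hE
  have hWd : ∀ (c : ℝ) (_ : 0 ≤ c) (i : Fin (f.n+1)) (j : Fin (g.n+1)),
      IsDDF (smulDDF c (γ (E ∩ (extA f g i ∩ extA g f j)))) :=
    fun c hc i j => smulDDF_isDDF hc (hmem _ (hPmem i j))
  have hWd' : ∀ (c : ℝ) (_ : 0 ≤ c) (j : Fin (g.n+1)) (i : Fin (f.n+1)),
      IsDDF (smulDDF c (γ (E ∩ (extA g f j ∩ extA f g i)))) :=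
    fun c hc j i => smulDDF_isDDF hc (hmem _ (hPmem' j i))
  have hval : ∀ (i : Fin (f.n+1)) (j : Fin (g.n+1)),
      ((maxCombine hempty hdiff hiUnion f g).piece T γ E hpd (finProdFinEquiv (i, j))).val =
        smulDDF (max (extc f i) (extc g j)) (γ (E ∩ (extA f g i ∩ extA g f j))) := by
    intro i j
    erw [piece_val, maxCombine_c, maxCombine_A, Equiv.symm_apply_apply]
  have hre : (maxCombine hempty hdiff hiUnion f g).integral T.1 γ E =
      (∏ i : Fin (f.n+1), ∏ j : Fin (g.n+1),
        (maxCombine hempty hdiff hiUnion f g).piece T γ E hpd (finProdFinEquiv (i, j))).val := by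
    rw [(maxCombine hempty hdiff hiUnion f g).integral_eq_prod T γ E hpd]
    exact congrArg Df.val
      ((Equiv.prod_comp finProdFinEquiv
        ((maxCombine hempty hdiff hiUnion f g).piece T γ E hpd)).symm.trans
        (Fintype.prod_prod_type _))
  constructor
  · rw [hre, ← prodV_eq (T := T) hdiff hmem f g hE
      (fun i => smulDDF_isDDF (extc_nonneg f i) (hmem _ (inter_memS hdiff hE (hXmem i))))]
    apply prod_val_mono
    intro i
    calc (∏ j, (maxCombine hempty hdiff hiUnion f g).piece T γ E hpd (finProdFinEquiv (i, j))).val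
        ≤ (∏ j : Fin (g.n+1),
            (⟨smulDDF (extc f i) (γ (E ∩ (extA f g i ∩ extA g f j))),
              hWd _ (extc_nonneg f i) i j⟩ : Df T)).val := by
          apply prod_val_mono
          intro j
          rw [hval i j]
          exact smulDDF_anti (extc_nonneg f i) (le_max_left _ _) (hmem _ (hPmem i j))
      _ = _ := by
          rw [collapse_lemma hempty hiUnion hmem hγ hd f g (extc_nonneg f i) i
            (hWd _ (extc_nonneg f i) i)
            (smulDDF_isDDF (extc_nonneg f i) (hmem _ (inter_memS hdiff hE (hXmem i))))
            (hPmem i)]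
  · rw [hre, ← prodV_eq (T := T) hdiff hmem g f hE
      (fun j => smulDDF_isDDF (extc_nonneg g j) (hmem _ (inter_memS hdiff hE (hYmem j))))]
    have hswap : (∏ i : Fin (f.n+1), ∏ j : Fin (g.n+1),
        (maxCombine hempty hdiff hiUnion f g).piece T γ E hpd (finProdFinEquiv (i, j))) =
        ∏ j : Fin (g.n+1), ∏ i : Fin (f.n+1),
        (maxCombine hempty hdiff hiUnion f g).piece T γ E hpd (finProdFinEquiv (i, j)) :=
      Finset.prod_comm
    rw [hswap]
    apply prod_val_mono
    intro j
    calc (∏ i, (maxCombine hempty hdiff hiUnion f g).piece T γ E hpd (finProdFinEquiv (i, j))).val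
        ≤ (∏ i : Fin (f.n+1),
            (⟨smulDDF (extc g j) (γ (E ∩ (extA g f j ∩ extA f g i))),
              hWd' _ (extc_nonneg g j) j i⟩ : Df T)).val := by
          apply prod_val_mono
          intro i
          rw [hval i j]
          have hsets : E ∩ (extA f g i ∩ extA g f j) = E ∩ (extA g f j ∩ extA f g i) := by
            rw [Set.inter_comm (extA f g i)]
          rw [hsets]
          exact smulDDF_anti (extc_nonneg g j) (le_max_right _ _) (hmem _ (hPmem' j i))
      _ = _ := by
          rw [collapse_lemma hempty hiUnion hmem hγ hd g f (extc_nonneg g j) j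
            (hWd' _ (extc_nonneg g j) j)
            (smulDDF_isDDF (extc_nonneg g j) (hmem _ (inter_memS hdiff hE (hYmem j))))
            (hPmem' j)]

end MaxIntegral

section Merge
variable {Ω : Type*} {S : Set (Set Ω)} {T : TFn} {γ : Set Ω → (ℝ → ℝ)}

/-- Combination of two simple functions restricted to disjoint sets. -/
def mergeOn (hdiff : ∀ A B : Set Ω, A ∈ S → B ∈ S → A \ B ∈ S)
    (𝔣 𝔤 : SimpleFn S) {E F : Set Ω} (hE : E ∈ S) (hF : F ∈ S)
    (hEF : Disjoint E F) : SimpleFn S where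
  n := 𝔣.n + 𝔤.n
  c := Fin.append 𝔣.c 𝔤.c
  A := Fin.append (fun i => 𝔣.A i ∩ E) (fun j => 𝔤.A j ∩ F)
  hc := by
    intro k
    induction k using Fin.addCases with
    | left i => rw [Fin.append_left]; exact 𝔣.hc i
    | right j => rw [Fin.append_right]; exact 𝔤.hc j
  hA := by
    intro k
    induction k using Fin.addCases with
    | left i => rw [Fin.append_left]; exact inter_memS hdiff (𝔣.hA i) hE
    | right j => rw [Fin.append_right]; exact inter_memS hdiff (𝔤.hA j) hF
  hdisj := by
    intro k k' hkk'
    show Disjoint _ _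
    induction k using Fin.addCases with
    | left i =>
      induction k' using Fin.addCases with
      | left i' =>
        rw [Fin.append_left, Fin.append_left]
        have : i ≠ i' := fun h => hkk' (by rw [h])
        exact (𝔣.hdisj this).mono Set.inter_subset_left Set.inter_subset_left
      | right j' =>
        rw [Fin.append_left, Fin.append_right]
        exact hEF.mono Set.inter_subset_right Set.inter_subset_right
    | right j =>
      induction k' using Fin.addCases with
      | left i' =>
        rw [Fin.append_right, Fin.append_left]
        exact hEF.symm.mono Set.inter_subset_right Set.inter_subset_right
      | right j' =>
        rw [Fin.append_right, Fin.append_right]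
        have : j ≠ j' := fun h => hkk' (by rw [h])
        exact (𝔤.hdisj this).mono Set.inter_subset_left Set.inter_subset_left

lemma mergeOn_belowOn (hdiff : ∀ A B : Set Ω, A ∈ S → B ∈ S → A \ B ∈ S)
    {𝔣 𝔤 : SimpleFn S} {E F : Set Ω} {hE : E ∈ S} {hF : F ∈ S}
    {hEF : Disjoint E F} {φ : Ω → ENNReal}
    (h𝔣 : 𝔣.belowOn φ E) (h𝔤 : 𝔤.belowOn φ F) :
    (mergeOn hdiff 𝔣 𝔤 hE hF hEF).belowOn φ (E ∪ F) := by
  intro t ht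
  by_cases hex : ∃ k, t ∈ (mergeOn hdiff 𝔣 𝔤 hE hF hEF).A k
  · rcases hex with ⟨k, hk⟩
    rw [(mergeOn hdiff 𝔣 𝔤 hE hF hEF).toFun_eq_of_mem hk]
    revert hk
    show t ∈ Fin.append (fun i => 𝔣.A i ∩ E) (fun j => 𝔤.A j ∩ F) k →
      ENNReal.ofReal (Fin.append 𝔣.c 𝔤.c k) ≤ φ t
    induction k using Fin.addCases with
    | left i =>
      rw [Fin.append_left, Fin.append_left]
      intro hk
      rw [← 𝔣.toFun_eq_of_mem hk.1]
      exact h𝔣 t hk.2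
    | right j =>
      rw [Fin.append_right, Fin.append_right]
      intro hk
      rw [← 𝔤.toFun_eq_of_mem hk.1]
      exact h𝔤 t hk.2
  · push_neg at hex
    rw [(mergeOn hdiff 𝔣 𝔤 hE hF hEF).toFun_eq_zero hex]
    simp

lemma mergeOn_integral (hdiff : ∀ A B : Set Ω, A ∈ S → B ∈ S → A \ B ∈ S)
    (hmem : ∀ E ∈ S, IsDDF (γ E)) (hγ : IsDecomposable S T.1 γ)
    (𝔣 𝔤 : SimpleFn S) {E F : Set Ω} (hE : E ∈ S) (hF : F ∈ S)
    (hEF : Disjoint E F) :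
    (mergeOn hdiff 𝔣 𝔤 hE hF hEF).integral T.1 γ E = 𝔣.integral T.1 γ E ∧
    (mergeOn hdiff 𝔣 𝔤 hE hF hEF).integral T.1 γ F = 𝔤.integral T.1 γ F := by
  constructor
  · have hpd := piece_ddf hdiff hmem (mergeOn hdiff 𝔣 𝔤 hE hF hEF) hE
    rw [(mergeOn hdiff 𝔣 𝔤 hE hF hEF).integral_eq_prod T γ E hpd]
    have hsplit := Fin.prod_univ_add (a := 𝔣.n) (b := 𝔤.n)
      ((mergeOn hdiff 𝔣 𝔤 hE hF hEF).piece T γ E hpd)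
    refine Eq.trans (congrArg Df.val hsplit) ?_
    have hleft : ∀ i : Fin 𝔣.n,
        (mergeOn hdiff 𝔣 𝔤 hE hF hEF).piece T γ E hpd (Fin.castAdd 𝔤.n i)
          = 𝔣.piece T γ E (piece_ddf hdiff hmem 𝔣 hE) i := by
      intro i
      apply Df.ext'
      erw [piece_val, piece_val]
      show smulDDF (Fin.append 𝔣.c 𝔤.c (Fin.castAdd 𝔤.n i))
        (γ (E ∩ Fin.append (fun i => 𝔣.A i ∩ E) (fun j => 𝔤.A j ∩ F) (Fin.castAdd 𝔤.n i))) = _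
      rw [Fin.append_left, Fin.append_left]
      have : E ∩ (𝔣.A i ∩ E) = E ∩ 𝔣.A i := by
        ext t; simp only [Set.mem_inter_iff]; tauto
      rw [this]
    have hright : ∀ j : Fin 𝔤.n,
        (mergeOn hdiff 𝔣 𝔤 hE hF hEF).piece T γ E hpd (Fin.natAdd 𝔣.n j) = 1 := by
      intro j
      apply Df.ext'
      erw [piece_val]
      show smulDDF (Fin.append 𝔣.c 𝔤.c (Fin.natAdd 𝔣.n j))
        (γ (E ∩ Fin.append (fun i => 𝔣.A i ∩ E) (fun j => 𝔤.A j ∩ F) (Fin.natAdd 𝔣.n j))) = _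
      rw [Fin.append_right, Fin.append_right]
      have : E ∩ (𝔤.A j ∩ F) = ∅ := by
        rw [Set.eq_empty_iff_forall_notMem]
        intro t ⟨ht1, _, ht3⟩
        exact hEF.ne_of_mem ht1 ht3 rfl
      rw [this, hγ.1, smulDDF_eps0 (𝔤.hc j)]
      rfl
    rw [Finset.prod_congr rfl (fun i _ => hleft i),
      Finset.prod_congr rfl (fun j _ => hright j),
      Finset.prod_const_one, mul_one,
      𝔣.integral_eq_prod T γ E (piece_ddf hdiff hmem 𝔣 hE)]
  · have hpd := piece_ddf hdiff hmem (mergeOn hdiff 𝔣 𝔤 hE hF hEF) hF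
    rw [(mergeOn hdiff 𝔣 𝔤 hE hF hEF).integral_eq_prod T γ F hpd]
    have hsplit := Fin.prod_univ_add (a := 𝔣.n) (b := 𝔤.n)
      ((mergeOn hdiff 𝔣 𝔤 hE hF hEF).piece T γ F hpd)
    refine Eq.trans (congrArg Df.val hsplit) ?_
    have hleft : ∀ i : Fin 𝔣.n,
        (mergeOn hdiff 𝔣 𝔤 hE hF hEF).piece T γ F hpd (Fin.castAdd 𝔤.n i) = 1 := by
      intro i
      apply Df.ext'
      erw [piece_val]
      show smulDDF (Fin.append 𝔣.c 𝔤.c (Fin.castAdd 𝔤.n i))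
        (γ (F ∩ Fin.append (fun i => 𝔣.A i ∩ E) (fun j => 𝔤.A j ∩ F) (Fin.castAdd 𝔤.n i))) = _
      rw [Fin.append_left, Fin.append_left]
      have : F ∩ (𝔣.A i ∩ E) = ∅ := by
        rw [Set.eq_empty_iff_forall_notMem]
        intro t ⟨ht1, _, ht3⟩
        exact hEF.ne_of_mem ht3 ht1 rfl
      rw [this, hγ.1, smulDDF_eps0 (𝔣.hc i)]
      rfl
    have hright : ∀ j : Fin 𝔤.n,
        (mergeOn hdiff 𝔣 𝔤 hE hF hEF).piece T γ F hpd (Fin.natAdd 𝔣.n j)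
          = 𝔤.piece T γ F (piece_ddf hdiff hmem 𝔤 hF) j := by
      intro j
      apply Df.ext'
      erw [piece_val, piece_val]
      show smulDDF (Fin.append 𝔣.c 𝔤.c (Fin.natAdd 𝔣.n j))
        (γ (F ∩ Fin.append (fun i => 𝔣.A i ∩ E) (fun j => 𝔤.A j ∩ F) (Fin.natAdd 𝔣.n j))) = _
      rw [Fin.append_right, Fin.append_right]
      have : F ∩ (𝔤.A j ∩ F) = F ∩ 𝔤.A j := by
        ext t; simp only [Set.mem_inter_iff]; tauto
      rw [this]
    rw [Finset.prod_congr rfl (fun i _ => hleft i),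
      Finset.prod_congr rfl (fun j _ => hright j),
      Finset.prod_const_one, one_mul,
      𝔤.integral_eq_prod T γ F (piece_ddf hdiff hmem 𝔤 hF)]

end Merge

section LcReg

lemma lcReg_def (G : ℝ → ℝ) (x : ℝ) : lcReg G x = sSup (G '' Set.Iio x) := rfl

lemma lcReg_img_ne (G : ℝ → ℝ) (x : ℝ) : (G '' Set.Iio x).Nonempty :=
  ⟨G (x - 1), x - 1, by simp, rfl⟩

lemma lcReg_img_bdd {G : ℝ → ℝ} (hb : ∀ x, G x ≤ 1) (x : ℝ) :
    BddAbove (G '' Set.Iio x) := by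
  refine ⟨1, ?_⟩
  rintro b ⟨z, _, rfl⟩
  exact hb z

lemma lcReg_mono {G : ℝ → ℝ} (hb : ∀ x, G x ≤ 1) : Monotone (lcReg G) := by
  intro x y hxy
  exact csSup_le_csSup (lcReg_img_bdd hb y) (lcReg_img_ne G x)
    (Set.image_mono (Set.Iio_subset_Iio hxy))

lemma lcReg_le_self {G : ℝ → ℝ} (hmono : Monotone G) (x : ℝ) : lcReg G x ≤ G x := by
  apply csSup_le (lcReg_img_ne G x)
  rintro b ⟨z, hz, rfl⟩
  exact hmono hz.le

lemma le_lcReg {G : ℝ → ℝ} (hb : ∀ x, G x ≤ 1) {y x : ℝ} (hyx : y < x) :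
    G y ≤ lcReg G x :=
  le_csSup (lcReg_img_bdd hb x) ⟨y, hyx, rfl⟩

lemma lcReg_le_one {G : ℝ → ℝ} (hb : ∀ x, G x ≤ 1) (x : ℝ) : lcReg G x ≤ 1 := by
  apply csSup_le (lcReg_img_ne G x)
  rintro b ⟨z, _, rfl⟩
  exact hb z

lemma lcReg_eq_self {G : ℝ → ℝ} (hmono : Monotone G)
    (hlc : ∀ x, ContinuousWithinAt G (Set.Iio x) x) : lcReg G = G := by
  funext x
  exact tendsto_nhds_unique (hmono.tendsto_nhdsLT x) (hlc x)

lemma lcReg_le_lcReg {G H : ℝ → ℝ} (hGH : G ≤ H) (hb : ∀ x, H x ≤ 1) (x : ℝ) :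
    lcReg G x ≤ lcReg H x := by
  apply csSup_le (lcReg_img_ne G x)
  rintro b ⟨z, hz, rfl⟩
  exact (hGH z).trans (le_lcReg hb hz)

end LcReg

section Nu
variable {Ω : Type*} {S : Set (Set Ω)} {T : TFn} {γ : Set Ω → (ℝ → ℝ)}

/-- The pointwise infimum whose regularization is `probIntegral`. -/
def nuArg (S : Set (Set Ω)) (T : TFn) (γ : Set Ω → (ℝ → ℝ)) (φ : Ω → ENNReal)
    (E : Set Ω) : ℝ → ℝ :=
  fun x => sInf {y | ∃ 𝔣 : SimpleFn S, 𝔣.belowOn φ E ∧ 𝔣.integral T.1 γ E x = y}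

lemma probIntegral_eq (φ : Ω → ENNReal) (E : Set Ω) :
    probIntegral S T.1 γ φ E = lcReg (nuArg S T γ φ E) := rfl

/-- The zero simple function. -/
def zeroSimple (S : Set (Set Ω)) : SimpleFn S :=
  ⟨0, Fin.elim0, Fin.elim0, fun i => i.elim0, fun i => i.elim0, fun i => i.elim0⟩

lemma zeroSimple_belowOn (φ : Ω → ENNReal) (E : Set Ω) :
    (zeroSimple S).belowOn φ E := by
  intro t _
  show ENNReal.ofReal (∑ i : Fin 0, _) ≤ φ t
  simp

lemma zeroSimple_integral (E : Set Ω) : (zeroSimple S).integral T.1 γ E = eps0 := rfl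

lemma nuArg_nonempty (φ : Ω → ENNReal) (E : Set Ω) (x : ℝ) :
    {y | ∃ 𝔣 : SimpleFn S, 𝔣.belowOn φ E ∧ 𝔣.integral T.1 γ E x = y}.Nonempty :=
  ⟨eps0 x, zeroSimple S, zeroSimple_belowOn φ E, rfl⟩

lemma nuArg_nonneg (hdiff : ∀ A B : Set Ω, A ∈ S → B ∈ S → A \ B ∈ S)
    (hmem : ∀ E ∈ S, IsDDF (γ E)) (φ : Ω → ENNReal) {E : Set Ω} (hE : E ∈ S) (x : ℝ) :
    0 ≤ nuArg S T γ φ E x := by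
  apply le_csInf (nuArg_nonempty φ E x)
  rintro b ⟨𝔣, h𝔣, rfl⟩
  exact ((integral_isDDF hdiff hmem 𝔣 hE).2.2.2.1 x).1

lemma nuArg_le (hdiff : ∀ A B : Set Ω, A ∈ S → B ∈ S → A \ B ∈ S)
    (hmem : ∀ E ∈ S, IsDDF (γ E)) (φ : Ω → ENNReal) {E : Set Ω} (hE : E ∈ S)
    {𝔣 : SimpleFn S} (h𝔣 : 𝔣.belowOn φ E) (x : ℝ) :
    nuArg S T γ φ E x ≤ 𝔣.integral T.1 γ E x := by
  have hbdd : BddBelow {y | ∃ 𝔤 : SimpleFn S, 𝔤.belowOn φ E ∧ 𝔤.integral T.1 γ E x = y} := by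
    refine ⟨0, ?_⟩
    rintro b ⟨𝔤, h𝔤, rfl⟩
    exact ((integral_isDDF hdiff hmem 𝔤 hE).2.2.2.1 x).1
  exact csInf_le hbdd ⟨𝔣, h𝔣, rfl⟩

lemma nuArg_le_one (hdiff : ∀ A B : Set Ω, A ∈ S → B ∈ S → A \ B ∈ S)
    (hmem : ∀ E ∈ S, IsDDF (γ E)) (φ : Ω → ENNReal) {E : Set Ω} (hE : E ∈ S) (x : ℝ) :
    nuArg S T γ φ E x ≤ 1 :=
  (nuArg_le hdiff hmem φ hE (zeroSimple_belowOn φ E) x).trans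
    (by rw [zeroSimple_integral]; exact (eps0_isDDF.2.2.2.1 x).2)

lemma nuArg_mono (hdiff : ∀ A B : Set Ω, A ∈ S → B ∈ S → A \ B ∈ S)
    (hmem : ∀ E ∈ S, IsDDF (γ E)) (φ : Ω → ENNReal) {E : Set Ω} (hE : E ∈ S) :
    Monotone (nuArg S T γ φ E) := by
  intro x y hxy
  apply le_csInf (nuArg_nonempty φ E y)
  rintro b ⟨𝔣, h𝔣, rfl⟩
  exact (nuArg_le hdiff hmem φ hE h𝔣 x).trans
    ((integral_isDDF hdiff hmem 𝔣 hE).1 hxy)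

lemma nuArg_vanish (hdiff : ∀ A B : Set Ω, A ∈ S → B ∈ S → A \ B ∈ S)
    (hmem : ∀ E ∈ S, IsDDF (γ E)) (φ : Ω → ENNReal) {E : Set Ω} (hE : E ∈ S)
    {x : ℝ} (hx : x ≤ 0) : nuArg S T γ φ E x = 0 := by
  apply le_antisymm
  · refine (nuArg_le hdiff hmem φ hE (zeroSimple_belowOn φ E) x).trans ?_
    rw [zeroSimple_integral]
    exact le_of_eq (eps0_isDDF.2.2.1 x hx)
  · exact nuArg_nonneg hdiff hmem φ hE x

lemma H_le_nuArg (φ : Ω → ENNReal) {E : Set Ω} {H : ℝ → ℝ}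
    (hH : ∀ 𝔣 : SimpleFn S, 𝔣.belowOn φ E → H ≤ 𝔣.integral T.1 γ E) (x : ℝ) :
    H x ≤ nuArg S T γ φ E x := by
  apply le_csInf (nuArg_nonempty φ E x)
  rintro b ⟨𝔣, h𝔣, rfl⟩
  exact hH 𝔣 h𝔣 x

lemma nu_le_integral (hdiff : ∀ A B : Set Ω, A ∈ S → B ∈ S → A \ B ∈ S)
    (hmem : ∀ E ∈ S, IsDDF (γ E)) (φ : Ω → ENNReal) {E : Set Ω} (hE : E ∈ S)
    {𝔣 : SimpleFn S} (h𝔣 : 𝔣.belowOn φ E) :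
    probIntegral S T.1 γ φ E ≤ 𝔣.integral T.1 γ E := by
  intro x
  rw [probIntegral_eq]
  exact (lcReg_le_lcReg (fun y => nuArg_le hdiff hmem φ hE h𝔣 y)
    (fun y => ((integral_isDDF hdiff hmem 𝔣 hE).2.2.2.1 y).2) x).trans
    (lcReg_le_self (integral_isDDF hdiff hmem 𝔣 hE).1 x)

lemma nu_isDDF (hdiff : ∀ A B : Set Ω, A ∈ S → B ∈ S → A \ B ∈ S)
    (hmem : ∀ E ∈ S, IsDDF (γ E)) (φ : Ω → ENNReal) {E : Set Ω} (hE : E ∈ S)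
    (hf : Integrable' (S := S) T.1 γ φ E) : IsDDF (probIntegral S T.1 γ φ E) := by
  rw [probIntegral_eq]
  set g := nuArg S T γ φ E with hg
  have hb : ∀ x, g x ≤ 1 := nuArg_le_one hdiff hmem φ hE
  have hνmono : Monotone (lcReg g) := lcReg_mono hb
  refine ⟨hνmono, ?_, ?_, ?_, ?_⟩
  · -- left continuity
    intro x
    have h1 : Tendsto (lcReg g) (nhdsWithin x (Set.Iio x))
        (nhds (sSup (lcReg g '' Set.Iio x))) := hνmono.tendsto_nhdsLT x
    have h2 : sSup (lcReg g '' Set.Iio x) = lcReg g x := by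
      apply le_antisymm
      · apply csSup_le (lcReg_img_ne _ x)
        rintro b ⟨z, hz, rfl⟩
        exact hνmono hz.le
      · apply csSup_le (lcReg_img_ne _ x)
        rintro b ⟨z, hz, rfl⟩
        have hz' : z < x := hz
        have hmid : z < (z + x) / 2 := by linarith
        have hmid2 : (z + x) / 2 < x := by linarith
        calc g z ≤ lcReg g ((z + x) / 2) := le_lcReg hb hmid
          _ ≤ sSup (lcReg g '' Set.Iio x) :=
            le_csSup (lcReg_img_bdd (lcReg_le_one hb) x) ⟨(z + x) / 2, hmid2, rfl⟩
    rw [ContinuousWithinAt]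
    rw [h2] at h1
    exact h1
  · -- vanishing
    intro x hx
    apply le_antisymm
    · apply csSup_le (lcReg_img_ne _ x)
      rintro b ⟨z, hz, rfl⟩
      exact le_of_eq (nuArg_vanish hdiff hmem φ hE (le_of_lt (lt_of_lt_of_le hz hx)))
    · rw [← nuArg_vanish hdiff hmem φ hE (show x - 1 ≤ 0 by linarith) (T := T)]
      exact le_lcReg hb (by linarith)
  · -- bounds
    intro x
    exact ⟨le_trans (nuArg_nonneg hdiff hmem φ hE (x - 1)) (le_lcReg hb (by linarith)),
      lcReg_le_one hb x⟩
  · -- tendsto 1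
    rcases hf with ⟨H, hHddf, hH⟩
    have hlow : ∀ x, H (x - 1) ≤ lcReg g x := by
      intro x
      exact (H_le_nuArg φ hH (x - 1)).trans (le_lcReg hb (by linarith))
    have hHtend : Tendsto (fun x => H (x - 1)) atTop (nhds 1) := by
      apply hHddf.2.2.2.2.comp
      exact tendsto_atTop_add_const_right atTop (-1) tendsto_id
    exact tendsto_of_tendsto_of_tendsto_of_le_of_le hHtend tendsto_const_nhds
      hlow (fun x => lcReg_le_one hb x)

lemma nu_empty (hγ : IsDecomposable S T.1 γ) (φ : Ω → ENNReal) :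
    probIntegral S T.1 γ φ ∅ = eps0 := by
  rw [probIntegral_eq]
  have hge : nuArg S T γ φ ∅ = eps0 := by
    funext x
    apply le_antisymm
    · have hbdd : BddBelow {y | ∃ 𝔣 : SimpleFn S, 𝔣.belowOn φ ∅ ∧ 𝔣.integral T.1 γ ∅ x = y} := by
        refine ⟨0, ?_⟩
        rintro b ⟨𝔣, h𝔣, rfl⟩
        rw [integral_empty hγ 𝔣]
        exact (eps0_isDDF.2.2.2.1 x).1
      exact csInf_le hbdd ⟨zeroSimple S, zeroSimple_belowOn φ ∅, rfl⟩
    · apply le_csInf (nuArg_nonempty φ ∅ x)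
      rintro b ⟨𝔣, h𝔣, rfl⟩
      rw [integral_empty hγ 𝔣]
  rw [hge, lcReg_eq_self eps0_isDDF.1 eps0_isDDF.2.1]

end Nu

section Approx
variable {Ω : Type*} {S : Set (Set Ω)} {T : TFn} {γ : Set Ω → (ℝ → ℝ)}

lemma dS_nonneg (G H : ℝ → ℝ) : 0 ≤ dS G H :=
  Real.sInf_nonneg (fun _ hx => hx.1.le)

lemma dS_bddBelow (G H : ℝ → ℝ) :
    BddBelow {h : ℝ | 0 < h ∧ ∀ x ∈ Set.Icc (0:ℝ) (1/h),
      G (x - h) - h ≤ H x ∧ H x ≤ G (x + h) + h} :=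
  ⟨0, fun _ hx => hx.1.le⟩

lemma one_mem_dS_set {G H : ℝ → ℝ} (hG : IsDDF G) (hH : IsDDF H) :
    (1:ℝ) ∈ {h : ℝ | 0 < h ∧ ∀ x ∈ Set.Icc (0:ℝ) (1/h),
      G (x - h) - h ≤ H x ∧ H x ≤ G (x + h) + h} := by
  refine ⟨one_pos, fun x _ => ⟨?_, ?_⟩⟩
  · have h1 : G (x - 1) ≤ 1 := (hG.2.2.2.1 _).2
    have h2 : 0 ≤ H x := (hH.2.2.2.1 _).1
    linarith
  · have h1 : H x ≤ 1 := (hH.2.2.2.1 _).2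
    have h2 : 0 ≤ G (x + 1) := (hG.2.2.2.1 _).1
    linarith

lemma dS_le_of_mem {G H : ℝ → ℝ} {h : ℝ}
    (hm : h ∈ {h : ℝ | 0 < h ∧ ∀ x ∈ Set.Icc (0:ℝ) (1/h),
      G (x - h) - h ≤ H x ∧ H x ≤ G (x + h) + h}) : dS G H ≤ h :=
  csInf_le (dS_bddBelow G H) hm

lemma exists_mem_dS_lt {G H : ℝ → ℝ} (hG : IsDDF G) (hH : IsDDF H) {b : ℝ}
    (hb : dS G H < b) : ∃ h, (0 < h ∧ ∀ x ∈ Set.Icc (0:ℝ) (1/h),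
      G (x - h) - h ≤ H x ∧ H x ≤ G (x + h) + h) ∧ h < b := by
  rcases exists_lt_of_csInf_lt ⟨1, one_mem_dS_set hG hH⟩ hb with ⟨a, ha, hab⟩
  exact ⟨a, ha, hab⟩

lemma approx_one (hempty : (∅ : Set Ω) ∈ S)
    (hdiff : ∀ A B : Set Ω, A ∈ S → B ∈ S → A \ B ∈ S)
    (hiUnion : ∀ g : ℕ → Set Ω, (∀ n, g n ∈ S) → (⋃ n, g n) ∈ S)
    (hmem : ∀ E ∈ S, IsDDF (γ E)) (hγ : IsDecomposable S T.1 γ)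
    (hd : IsDistributive T.1) (φ : Ω → ENNReal) {E : Set Ω} (hE : E ∈ S)
    (hf : Integrable' (S := S) T.1 γ φ E) {h : ℝ} (hh : 0 < h) :
    ∃ 𝔣 : SimpleFn S, 𝔣.belowOn φ E ∧
      (0 < h ∧ ∀ x ∈ Set.Icc (0:ℝ) (1/h),
        𝔣.integral T.1 γ E (x - h) - h ≤ probIntegral S T.1 γ φ E x ∧
        probIntegral S T.1 γ φ E x ≤ 𝔣.integral T.1 γ E (x + h) + h) := by
  set g := nuArg S T γ φ E with hgdef
  have hb1 : ∀ x, g x ≤ 1 := nuArg_le_one hdiff hmem φ hE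
  have hν := nu_isDDF hdiff hmem φ hE hf
  -- choose good simple functions at grid points
  have hch : ∀ k : ℕ, ∃ 𝔣 : SimpleFn S, 𝔣.belowOn φ E ∧
      𝔣.integral T.1 γ E ((k + 1) * (h/2)) < g ((k + 1) * (h/2)) + h := by
    intro k
    have hlt : g ((k + 1) * (h/2)) < g ((k + 1) * (h/2)) + h := by linarith
    rcases exists_lt_of_csInf_lt (nuArg_nonempty φ E _) hlt with ⟨b, ⟨𝔣, h𝔣, rfl⟩, hbb⟩
    exact ⟨𝔣, h𝔣, hbb⟩
  choose pick hbelow hlt using hch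
  set K : ℕ := ⌈2/(h*h)⌉₊
  -- fold the picks with maxCombine
  let Ffold : ℕ → SimpleFn S := fun n =>
    Nat.rec (pick 0) (fun n prev => maxCombine hempty hdiff hiUnion prev (pick (n+1))) n
  have hFsucc : ∀ n, Ffold (n+1) = maxCombine hempty hdiff hiUnion (Ffold n) (pick (n+1)) :=
    fun n => rfl
  have hFold : ∀ n : ℕ, (Ffold n).belowOn φ E ∧
      ∀ k ≤ n, (Ffold n).integral T.1 γ E ≤ (pick k).integral T.1 γ E := by
    intro n
    induction n with
    | zero =>
      refine ⟨hbelow 0, fun k hk => ?_⟩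
      interval_cases k
      exact le_refl _
    | succ n ih =>
      rw [hFsucc]
      refine ⟨maxCombine_belowOn hempty hdiff hiUnion ih.1 (hbelow (n+1)), ?_⟩
      intro k hk
      rcases Nat.lt_succ_iff_lt_or_eq.1 (Nat.lt_succ_of_le hk) with hk' | rfl
      · exact le_trans
          (maxCombine_integral_le hempty hdiff hiUnion hmem hγ hd _ _ hE).1
          (ih.2 k (Nat.lt_succ_iff.1 hk'))
      · exact (maxCombine_integral_le hempty hdiff hiUnion hmem hγ hd _ _ hE).2
  refine ⟨Ffold K, (hFold K).1, hh, ?_⟩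
  intro x hx
  have hfddf := integral_isDDF (T := T) hdiff hmem (Ffold K) hE
  constructor
  · -- lower estimate
    rcases le_or_gt (x - h) 0 with hxh | hxh
    · have h0 : (Ffold K).integral T.1 γ E (x - h) = 0 := hfddf.2.2.1 _ hxh
      rw [h0]
      have := (hν.2.2.2.1 x).1
      linarith
    · set y := x - h with hy
      set m : ℕ := ⌈y / (h/2)⌉₊ with hm
      have hh2 : 0 < h / 2 := by linarith
      have hmpos : 0 < m := Nat.ceil_pos.2 (div_pos hxh hh2)
      set k0 : ℕ := m - 1 with hk0def
      have hk0 : k0 + 1 = m := Nat.succ_pred_eq_of_pos hmpos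
      have hk0r : ((k0:ℝ) + 1) = (m:ℝ) := by exact_mod_cast congrArg (Nat.cast (R := ℝ)) hk0
      set z : ℝ := ((k0:ℝ) + 1) * (h/2) with hzdef
      have hyz : y ≤ z := by
        have h1 : y / (h/2) ≤ (m:ℝ) := Nat.le_ceil _
        have h2 : y ≤ (m:ℝ) * (h/2) := by
          rw [div_le_iff₀ hh2] at h1
          linarith
        rw [hzdef, hk0r]
        exact h2
      have hzlt : z < x := by
        have h1 : (k0:ℝ) < y / (h/2) := by
          have : k0 < m := by omega
          rw [hm] at this
          exact_mod_cast Nat.lt_ceil.1 this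
        rw [lt_div_iff₀ hh2] at h1
        have : z = (k0:ℝ) * (h/2) + h/2 := by rw [hzdef]; ring
        rw [this]
        have hyx : y + h = x := by rw [hy]; ring
        linarith
      have hk0K : k0 ≤ K := by
        have hm2 : m ≤ K := by
          rw [hm]
          apply Nat.ceil_le_ceil
          have hy2 : y ≤ 1/h := by
            have hx2 := hx.2
            rw [hy]; linarith
          rw [div_le_div_iff₀ hh2 (by positivity : (0:ℝ) < h * h)]
          have hinv : (1/h) * (h*h) = h := by field_simp
          nlinarith [mul_le_mul_of_nonneg_right hy2 (mul_pos hh hh).le]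
        omega
      have hI1 : (Ffold K).integral T.1 γ E y ≤ (Ffold K).integral T.1 γ E z :=
        hfddf.1 hyz
      have hI2 : (Ffold K).integral T.1 γ E z ≤ (pick k0).integral T.1 γ E z :=
        (hFold K).2 k0 hk0K z
      have hI3 : (pick k0).integral T.1 γ E z < g z + h := hlt k0
      have hgz : g z ≤ probIntegral S T.1 γ φ E x := by
        rw [probIntegral_eq]
        exact le_lcReg hb1 hzlt
      linarith
  · -- upper estimate
    have h1 : probIntegral S T.1 γ φ E x ≤ (Ffold K).integral T.1 γ E x :=
      nu_le_integral hdiff hmem φ hE (hFold K).1 x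
    have h2 : (Ffold K).integral T.1 γ E x ≤ (Ffold K).integral T.1 γ E (x + h) :=
      hfddf.1 (by linarith)
    linarith

end Approx

section ApproxSeq
variable {Ω : Type*} {S : Set (Set Ω)} {T : TFn} {γ : Set Ω → (ℝ → ℝ)}

lemma approx_seq (hempty : (∅ : Set Ω) ∈ S)
    (hdiff : ∀ A B : Set Ω, A ∈ S → B ∈ S → A \ B ∈ S)
    (hiUnion : ∀ g : ℕ → Set Ω, (∀ n, g n ∈ S) → (⋃ n, g n) ∈ S)
    (hmem : ∀ E ∈ S, IsDDF (γ E)) (hγ : IsDecomposable S T.1 γ)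
    (hd : IsDistributive T.1) (φ : Ω → ENNReal) {E : Set Ω} (hE : E ∈ S)
    (hf : Integrable' (S := S) T.1 γ φ E) :
    ∃ 𝔣seq : ℕ → SimpleFn S, (∀ m, (𝔣seq m).belowOn φ E) ∧
      Tendsto (fun m => dS ((𝔣seq m).integral T.1 γ E) (probIntegral S T.1 γ φ E))
        atTop (nhds 0) := by
  have hch : ∀ m : ℕ, ∃ 𝔣 : SimpleFn S, 𝔣.belowOn φ E ∧
      dS (𝔣.integral T.1 γ E) (probIntegral S T.1 γ φ E) ≤ 1/((m:ℝ)+1) := by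
    intro m
    have hh : (0:ℝ) < 1/((m:ℝ)+1) := by positivity
    obtain ⟨𝔣, hb, hmem'⟩ := approx_one hempty hdiff hiUnion hmem hγ hd φ hE hf hh
    exact ⟨𝔣, hb, dS_le_of_mem hmem'⟩
  choose 𝔣seq hbel hds using hch
  refine ⟨𝔣seq, hbel, ?_⟩
  exact tendsto_of_tendsto_of_tendsto_of_le_of_le tendsto_const_nhds
    tendsto_one_div_add_atTop_nhds_zero_nat (fun m => dS_nonneg _ _) hds

end ApproxSeq


/-- for each (simple) γ-integrable non-negative f, the set function
ν^f_E := ∫_E f dγ is itself a τ-decomposable measure. -/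
theorem stmt19 {Ω : Type*} (S : Set (Set Ω))
    (hempty : (∅ : Set Ω) ∈ S)
    (hdiff : ∀ A B : Set Ω, A ∈ S → B ∈ S → A \ B ∈ S)
    (hiUnion : ∀ g : ℕ → Set Ω, (∀ n, g n ∈ S) → (⋃ n, g n) ∈ S)
    (τ : (ℝ → ℝ) → (ℝ → ℝ) → (ℝ → ℝ)) (hτ : IsTriangleFn τ)
    (hct : IsContinuousTriangle τ) (hd : IsDistributive τ)
    (γ : Set Ω → (ℝ → ℝ)) (hmem : ∀ E ∈ S, IsDDF (γ E)) (hγ : IsDecomposable S τ γ)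
    (hcb : ContinuousFromBelow S γ) :
    (∀ f : SimpleFn S, f.integral τ γ ∅ = eps0 ∧
      ∀ E F : Set Ω, E ∈ S → F ∈ S → Disjoint E F →
        f.integral τ γ (E ∪ F) = τ (f.integral τ γ E) (f.integral τ γ F)) ∧
    (∀ f : Ω → ENNReal, probIntegral S τ γ f ∅ = eps0 ∧
      ∀ E F : Set Ω, E ∈ S → F ∈ S → Disjoint E F →
        Integrable' (S := S) τ γ f E → Integrable' (S := S) τ γ f F →
        Integrable' (S := S) τ γ f (E ∪ F) →
        probIntegral S τ γ f (E ∪ F) =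
          τ (probIntegral S τ γ f E) (probIntegral S τ γ f F)) :=
by
  set T : TFn := ⟨τ, hτ⟩ with hT
  constructor
  · intro f
    exact ⟨integral_empty (T := T) hγ f,
      fun E F hE hF hEF => integral_union (T := T) hempty hdiff hmem hγ hd f hE hF hEF⟩
  · intro φ
    refine ⟨nu_empty (T := T) hγ φ, ?_⟩
    intro E F hE hF hEF hIE hIF hIEF
    have hEFm : E ∪ F ∈ S := union_memS hempty hiUnion hE hF
    have hνE : IsDDF (probIntegral S T.1 γ φ E) := nu_isDDF hdiff hmem φ hE hIE
    have hνF : IsDDF (probIntegral S T.1 γ φ F) := nu_isDDF hdiff hmem φ hF hIF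
    have hνU : IsDDF (probIntegral S T.1 γ φ (E ∪ F)) := nu_isDDF hdiff hmem φ hEFm hIEF
    have hTddf : IsDDF (T.1 (probIntegral S T.1 γ φ E) (probIntegral S T.1 γ φ F)) :=
      T.2.1 _ _ hνE hνF
    show probIntegral S T.1 γ φ (E ∪ F) =
      T.1 (probIntegral S T.1 γ φ E) (probIntegral S T.1 γ φ F)
    have hbU1 : ∀ x, nuArg S T γ φ (E ∪ F) x ≤ 1 := nuArg_le_one hdiff hmem φ hEFm
    -- direction ≥ : τ(νE, νF) ≤ ν(E∪F)
    have hge : T.1 (probIntegral S T.1 γ φ E) (probIntegral S T.1 γ φ F) ≤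
        probIntegral S T.1 γ φ (E ∪ F) := by
      have h1 : ∀ y, T.1 (probIntegral S T.1 γ φ E) (probIntegral S T.1 γ φ F) y ≤
          nuArg S T γ φ (E ∪ F) y := by
        intro y
        apply le_csInf (nuArg_nonempty φ (E ∪ F) y)
        rintro b ⟨𝔥, h𝔥, rfl⟩
        have hbE : 𝔥.belowOn φ E := fun t ht => h𝔥 t (Set.mem_union_left F ht)
        have hbF : 𝔥.belowOn φ F := fun t ht => h𝔥 t (Set.mem_union_right E ht)
        have hsplit : 𝔥.integral T.1 γ (E ∪ F) =
            T.1 (𝔥.integral T.1 γ E) (𝔥.integral T.1 γ F) :=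
          integral_union hempty hdiff hmem hγ hd 𝔥 hE hF hEF
        rw [hsplit]
        exact tau_mono₂ T (nu_le_integral hdiff hmem φ hE hbE)
          (nu_le_integral hdiff hmem φ hF hbF) y
      intro x
      calc T.1 (probIntegral S T.1 γ φ E) (probIntegral S T.1 γ φ F) x
          = lcReg (T.1 (probIntegral S T.1 γ φ E) (probIntegral S T.1 γ φ F)) x := by
            rw [lcReg_eq_self hTddf.1 hTddf.2.1]
        _ ≤ lcReg (nuArg S T γ φ (E ∪ F)) x := lcReg_le_lcReg h1 hbU1 x
        _ = probIntegral S T.1 γ φ (E ∪ F) x := by rw [probIntegral_eq]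
    -- direction ≤ : ν(E∪F) ≤ τ(νE, νF)
    have hle : probIntegral S T.1 γ φ (E ∪ F) ≤
        T.1 (probIntegral S T.1 γ φ E) (probIntegral S T.1 γ φ F) := by
      obtain ⟨𝔣seq, h𝔣bel, h𝔣ds⟩ :=
        approx_seq (T := T) hempty hdiff hiUnion hmem hγ hd φ hE hIE
      obtain ⟨𝔤seq, h𝔤bel, h𝔤ds⟩ :=
        approx_seq (T := T) hempty hdiff hiUnion hmem hγ hd φ hF hIF
      have hGd : ∀ m, IsDDF ((𝔣seq m).integral T.1 γ E) :=
        fun m => integral_isDDF hdiff hmem _ hE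
      have hHd : ∀ m, IsDDF ((𝔤seq m).integral T.1 γ F) :=
        fun m => integral_isDDF hdiff hmem _ hF
      have hhct := hct (probIntegral S T.1 γ φ E) (probIntegral S T.1 γ φ F)
        (fun m => (𝔣seq m).integral T.1 γ E) (fun m => (𝔤seq m).integral T.1 γ F)
        hνE hνF hGd hHd h𝔣ds h𝔤ds
      have hJ : ∀ m, probIntegral S T.1 γ φ (E ∪ F) ≤
          T.1 ((𝔣seq m).integral T.1 γ E) ((𝔤seq m).integral T.1 γ F) := by
        intro m
        have hbel : (mergeOn hdiff (𝔣seq m) (𝔤seq m) hE hF hEF).belowOn φ (E ∪ F) :=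
          mergeOn_belowOn hdiff (h𝔣bel m) (h𝔤bel m)
        have h2 := nu_le_integral (T := T) hdiff hmem φ hEFm hbel
        have h3 : (mergeOn hdiff (𝔣seq m) (𝔤seq m) hE hF hEF).integral T.1 γ (E ∪ F) =
            T.1 ((𝔣seq m).integral T.1 γ E) ((𝔤seq m).integral T.1 γ F) := by
          rw [integral_union hempty hdiff hmem hγ hd _ hE hF hEF,
            (mergeOn_integral hdiff hmem hγ (𝔣seq m) (𝔤seq m) hE hF hEF).1,
            (mergeOn_integral hdiff hmem hγ (𝔣seq m) (𝔤seq m) hE hF hEF).2]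
        rw [h3] at h2
        exact h2
      have hJd : ∀ m, IsDDF (T.1 ((𝔣seq m).integral T.1 γ E) ((𝔤seq m).integral T.1 γ F)) :=
        fun m => T.2.1 _ _ (hGd m) (hHd m)
      -- pointwise conclusion
      have key : ∀ y, 0 < y → ∀ δ, 0 < δ →
          probIntegral S T.1 γ φ (E ∪ F) y ≤
          T.1 (probIntegral S T.1 γ φ E) (probIntegral S T.1 γ φ F) (y + δ) + δ := by
        intro y hy δ hδ
        set Tf := T.1 (probIntegral S T.1 γ φ E) (probIntegral S T.1 γ φ F) with hTf
        set ρ := min δ (min 1 (1/(y+1))) with hρ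
        have hρpos : 0 < ρ := by
          apply lt_min hδ
          apply lt_min one_pos
          positivity
        obtain ⟨m, hm⟩ := (hhct.eventually (eventually_mem_set.2 (Iio_mem_nhds hρpos))).exists
        have hm' : dS (T.1 ((𝔣seq m).integral T.1 γ E) ((𝔤seq m).integral T.1 γ F)) Tf < ρ := hm
        obtain ⟨h, ⟨hhpos, hprop⟩, hhρ⟩ := exists_mem_dS_lt (hJd m) hTddf hm'
        have hh1 : h ≤ 1 := le_of_lt (lt_of_lt_of_le hhρ (le_trans (min_le_right _ _) (min_le_left _ _)))
        have hhy : h ≤ 1/(y+1) := le_of_lt (lt_of_lt_of_le hhρ (le_trans (min_le_right _ _) (min_le_right _ _)))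
        have hhδ : h ≤ δ := le_of_lt (lt_of_lt_of_le hhρ (min_le_left _ _))
        have hyh : y + h ∈ Set.Icc (0:ℝ) (1/h) := by
          constructor
          · linarith
          · have h1y : (0:ℝ) < y + 1 := by linarith
            have : y + 1 ≤ 1/h := by
              rw [le_div_iff₀ hhpos]
              calc (y+1) * h ≤ (y+1) * (1/(y+1)) :=
                    mul_le_mul_of_nonneg_left hhy (by linarith)
                _ = 1 := by field_simp
            linarith
        have hkey := (hprop (y + h) hyh).1
        have hsimp : y + h - h = y := by ring
        rw [hsimp] at hkey
        have h5 : probIntegral S T.1 γ φ (E ∪ F) y ≤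
            T.1 ((𝔣seq m).integral T.1 γ E) ((𝔤seq m).integral T.1 γ F) y := hJ m y
        have h6 : Tf (y + h) ≤ Tf (y + δ) := hTddf.1 (by linarith)
        calc probIntegral S T.1 γ φ (E ∪ F) y
            ≤ T.1 ((𝔣seq m).integral T.1 γ E) ((𝔤seq m).integral T.1 γ F) y := h5
          _ ≤ Tf (y + h) + h := by linarith
          _ ≤ Tf (y + δ) + δ := by linarith
      -- now deduce pointwise ≤
      intro x
      rcases le_or_gt x 0 with hx | hx
      · rw [hνU.2.2.1 x hx]
        exact (hTddf.2.2.2.1 x).1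
      · have hν_lc : probIntegral S T.1 γ φ (E ∪ F) x =
            sSup (probIntegral S T.1 γ φ (E ∪ F) '' Set.Iio x) := by
          conv_lhs => rw [← lcReg_eq_self hνU.1 hνU.2.1]
          rfl
        rw [hν_lc]
        apply csSup_le (lcReg_img_ne _ x)
        rintro b ⟨y, hyx, rfl⟩
        have hyx' : y < x := hyx
        rcases le_or_gt y 0 with hy | hy
        · rw [hνU.2.2.1 y hy]
          exact (hTddf.2.2.2.1 x).1
        · by_contra hcon
          push_neg at hcon
          set c := probIntegral S T.1 γ φ (E ∪ F) y with hc
          set d := T.1 (probIntegral S T.1 γ φ E) (probIntegral S T.1 γ φ F) x with hd2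
          set δ := min ((c - d)/2) ((x - y)/2) with hδdef
          have hδpos : 0 < δ := by
            apply lt_min <;> linarith
          have h1 := key y hy δ hδpos
          have h2 : y + δ ≤ x := by
            have : δ ≤ (x - y)/2 := min_le_right _ _
            linarith
          have h3 : T.1 (probIntegral S T.1 γ φ E) (probIntegral S T.1 γ φ F) (y + δ) ≤ d :=
            hTddf.1 h2
          have h4 : δ ≤ (c - d)/2 := min_le_left _ _
          linarith
    exact le_antisymm hle hge


end
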